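/- For u ≥ 0 and 0 ≤ k ≤ ⌊u/2⌋, the number of sparse subsets S ⊆ {1,...,u} of cardinality k equals (u choose k) − (u choose k−1), where (u choose −1) = 0. -/
import Mathlib

open Finset

def SparseSet (S : Finset ℕ) : Prop :=
  ∀ i : ℕ, 2 * (S.filter (· ≤ i)).card ≤ i

noncomputable instance : DecidablePred SparseSet := fun _ => Classical.dec _

lemma sparse_empty : SparseSet ∅ := fun i => by simp

lemma sparse_mono {S T : Finset ℕ} (h : S ⊆ T) (hT : SparseSet T) : SparseSet S := by
  intro i
  exact le_trans (Nat.mul_le_mul_left 2 (card_le_card (filter_subset_filter _ h))) (hT i)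

lemma sparse_bound {S : Finset ℕ} {u : ℕ} (hS : S ⊆ Icc 1 u) (h : SparseSet S) :
    2 * S.card ≤ u := by
  have hf : S.filter (· ≤ u) = S := filter_eq_self.2 (fun x hx => (mem_Icc.1 (hS hx)).2)
  simpa [hf] using h u

noncomputable def F (u k : ℕ) : ℕ :=
  ((Icc 1 u).powerset.filter (fun S => S.card = k ∧ SparseSet S)).card

lemma F_zero (u : ℕ) : F u 0 = 1 := by
  have h : (Icc 1 u).powerset.filter (fun S => S.card = 0 ∧ SparseSet S) = {∅} := by
    ext S
    rw [mem_filter, mem_powerset, mem_singleton]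
    constructor
    · rintro ⟨_, h, _⟩; exact card_eq_zero.1 h
    · rintro rfl; exact ⟨empty_subset _, rfl, sparse_empty⟩
  rw [F, h, card_singleton]

lemma F_of_big {u k : ℕ} (h : u < 2 * k) : F u k = 0 := by
  rw [F, card_eq_zero, filter_eq_empty_iff]
  rintro S hS ⟨hcard, hsp⟩
  have := sparse_bound (mem_powerset.1 hS) hsp
  omega

lemma sparse_insert {T : Finset ℕ} {u k : ℕ} (hT : T ⊆ Icc 1 u) (hsp : SparseSet T)
    (hcard : T.card = k - 1) (hk : 1 ≤ k) (hku : 2 * k ≤ u + 1) :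
    SparseSet (insert (u + 1) T) := by
  intro i
  by_cases hi : u + 1 ≤ i
  · have h1 : (insert (u + 1) T).filter (· ≤ i) = insert (u + 1) T := by
      apply filter_eq_self.2
      intro x hx
      rcases mem_insert.1 hx with rfl | hx
      · exact hi
      · have := (mem_Icc.1 (hT hx)).2; omega
    have hnot : (u + 1) ∉ T := fun h => by have := (mem_Icc.1 (hT h)).2; omega
    rw [h1, card_insert_of_notMem hnot, hcard]
    omega
  · have h1 : (insert (u + 1) T).filter (· ≤ i) = T.filter (· ≤ i) := by
      rw [filter_insert, if_neg (by omega)]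
    rw [h1]; exact hsp i

lemma F_rec {u k : ℕ} (hk : 1 ≤ k) (hku : 2 * k ≤ u + 1) :
    F (u + 1) k = F u k + F u (k - 1) := by
  classical
  set X := (Icc 1 (u + 1)).powerset.filter (fun S => S.card = k ∧ SparseSet S) with hX
  have hsplit : (X.filter (fun S => (u + 1) ∈ S)).card
      + (X.filter (fun S => (u + 1) ∉ S)).card = X.card :=
    card_filter_add_card_filter_not _
  have hA : X.filter (fun S => (u + 1) ∉ S)
      = (Icc 1 u).powerset.filter (fun S => S.card = k ∧ SparseSet S) := by
    ext S
    rw [mem_filter, hX, mem_filter, mem_powerset, mem_filter, mem_powerset]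
    constructor
    · rintro ⟨⟨hsub, hc, hs⟩, hnot⟩
      refine ⟨fun x hx => ?_, hc, hs⟩
      have h1 := mem_Icc.1 (hsub hx)
      have : x ≠ u + 1 := fun h => hnot (h ▸ hx)
      exact mem_Icc.2 ⟨h1.1, by omega⟩
    · rintro ⟨hsub, hc, hs⟩
      have hnot : (u + 1) ∉ S := fun h => by have := (mem_Icc.1 (hsub h)).2; omega
      exact ⟨⟨hsub.trans (Icc_subset_Icc_right (by omega)), hc, hs⟩, hnot⟩
  have hB : (X.filter (fun S => (u + 1) ∈ S)).card = F u (k - 1) := by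
    rw [F]
    apply card_bij (fun S _ => S.erase (u + 1))
    · rintro S hS
      rw [mem_filter] at hS
      obtain ⟨hSX, hmem⟩ := hS
      rw [hX, mem_filter, mem_powerset] at hSX
      obtain ⟨hsub, hc, hs⟩ := hSX
      rw [mem_filter, mem_powerset]
      refine ⟨fun x hx => ?_, ?_, sparse_mono (erase_subset _ _) hs⟩
      · have hx' := mem_erase.1 hx
        have h1 := mem_Icc.1 (hsub hx'.2)
        exact mem_Icc.2 ⟨h1.1, by omega⟩
      · rw [card_erase_of_mem hmem, hc]
    · rintro S hS S' hS' h
      rw [mem_filter] at hS hS'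
      have h1 : insert (u+1) (S.erase (u+1)) = insert (u+1) (S'.erase (u+1)) := by rw [h]
      rwa [insert_erase hS.2, insert_erase hS'.2] at h1
    · rintro T hT
      rw [mem_filter, mem_powerset] at hT
      obtain ⟨hsub, hc, hs⟩ := hT
      have hnot : (u + 1) ∉ T := fun h => by have := (mem_Icc.1 (hsub h)).2; omega
      refine ⟨insert (u + 1) T, ?_, ?_⟩
      · rw [mem_filter]
        refine ⟨?_, mem_insert_self _ _⟩
        rw [hX, mem_filter, mem_powerset]
        refine ⟨?_, ?_, sparse_insert hsub hs hc hk hku⟩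
        · intro x hx
          rcases mem_insert.1 hx with rfl | hx
          · exact mem_Icc.2 ⟨by omega, le_refl _⟩
          · exact Icc_subset_Icc_right (by omega) (hsub hx)
        · rw [card_insert_of_notMem hnot, hc]; omega
      · rw [erase_insert hnot]
  have hA' : (X.filter (fun S => (u + 1) ∉ S)).card = F u k := by rw [hA]; rfl
  have : F (u + 1) k = X.card := rfl
  omega

lemma F_formula : ∀ u k : ℕ, 2 * k ≤ u →
    (F u k : ℤ) = (u.choose k : ℤ) - (if k = 0 then 0 else (u.choose (k - 1) : ℤ)) := by
  intro u
  induction u with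
  | zero =>
    intro k hk
    have : k = 0 := by omega
    subst this
    simp [F_zero]
  | succ u ih =>
    intro k hk
    by_cases hk0 : k = 0
    · subst hk0; simp [F_zero]
    · obtain ⟨j, rfl⟩ : ∃ j, k = j + 1 := ⟨k - 1, by omega⟩
      rw [F_rec (by omega) hk]
      have hFk : (F u (j + 1) : ℤ) = (u.choose (j + 1) : ℤ) - (u.choose j : ℤ) := by
        by_cases h : 2 * (j + 1) ≤ u
        · have := ih (j + 1) h
          rw [if_neg (by omega)] at this
          simpa using this
        · have h0 : F u (j + 1) = 0 := F_of_big (by omega)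
          have hcc : u.choose (j + 1) = u.choose j := by
            have hu : u = 2 * j + 1 := by omega
            subst hu
            rw [← Nat.choose_symm (by omega)]
            congr 1
            omega
          rw [h0, hcc]; push_cast; ring
      have hFk1 : (F u j : ℤ) = (u.choose j : ℤ)
          - (if j = 0 then 0 else (u.choose (j - 1) : ℤ)) := ih j (by omega)
      have hs1 : (j + 1) - 1 = j := by omega
      rw [if_neg hk0, hs1]
      have p1 : (u + 1).choose (j + 1) = u.choose j + u.choose (j + 1) :=
        Nat.choose_succ_succ u j
      push_cast
      rw [hFk, hFk1, p1]
      by_cases hj : j = 0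
      · subst hj
        simp
      · obtain ⟨m, rfl⟩ : ∃ m, j = m + 1 := ⟨j - 1, by omega⟩
        have p2 : (u + 1).choose (m + 1) = u.choose m + u.choose (m + 1) :=
          Nat.choose_succ_succ u m
        have hs2 : (m + 1) - 1 = m := by omega
        rw [if_neg hj, hs2, p2]
        push_cast
        ring

theorem statement5 (u k : ℕ) (hk : k ≤ u / 2) :
    ((((Finset.Icc 1 u).powerset.filter
        (fun S => S.card = k ∧ SparseSet S)).card : ℤ)) =
      (u.choose k : ℤ) - (if k = 0 then 0 else (u.choose (k - 1) : ℤ)) := by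
  exact F_formula u k (by omega)
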